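/- Let G_ω be a weighted star graph with center x and leaves v_1,…,v_n (n ≥ 1), where the only edges are xv_1,…,xv_n, and suppose a = ω(xv_1) satisfies ω(xv_1) ≥ ω(xv_i) for all i. Then for every t ≥ 1, π_t(G_ω, x) = t·a + ∑_{i=2}^{n} (ω(xv_i) − 1). -/

import Mathlib

open Finset

variable {V : Type*}

/-- Applying the pebbling move `m = (v, u)` on `G_ω`: remove `ω v u` pebbles at `v`
and add one pebble at `u`. -/
def moveFn [DecidableEq V] (ω : V → V → ℕ) (m : V × V) (p : V → ℤ) : V → ℤ :=
  fun w => if w = m.1 then p m.1 - ω m.1 m.2 else if w = m.2 then p m.2 + 1 else p w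

/-- The pebble function obtained after applying a sequence of pebbling moves. -/
def applyList [DecidableEq V] (ω : V → V → ℕ) : List (V × V) → (V → ℤ) → (V → ℤ)
  | [], p => p
  | m :: l, p => applyList ω l (moveFn ω m p)

/-- A pebbling sequence is executable from `p` if every move is along an edge of `G`
and every intermediate pebble function is nonnegative. -/
def Executable [DecidableEq V] (G : SimpleGraph V) (ω : V → V → ℕ) :
    (V → ℤ) → List (V × V) → Prop
  | _, [] => True
  | p, m :: l => G.Adj m.1 m.2 ∧ (∀ w, 0 ≤ moveFn ω m p w) ∧ Executable G ω (moveFn ω m p) l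

/-- `x` is `t`-reachable from `p` on the weighted graph `G_ω`. -/
def Reaches [DecidableEq V] (G : SimpleGraph V) (ω : V → V → ℕ) (p : V → ℤ) (x : V)
    (t : ℕ) : Prop :=
  ∃ l : List (V × V), Executable G ω p l ∧ (t : ℤ) ≤ applyList ω l p x

/-- A pebble distribution is a nonnegative pebble function. -/
def IsDistrib (p : V → ℤ) : Prop := ∀ v, 0 ≤ p v

/-- The size of a pebble distribution: the total number of pebbles. -/
def size [Fintype V] (p : V → ℤ) : ℤ := ∑ v, p v

/-- The `t`-pebbling number `π_t(G_ω, x)`: the least `m` such that `x` is `t`-reachable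
from every pebble distribution of size `m`. -/
noncomputable def piT [Fintype V] [DecidableEq V] (G : SimpleGraph V) (ω : V → V → ℕ)
    (x : V) (t : ℕ) : ℕ :=
  sInf {m : ℕ | ∀ p : V → ℤ, IsDistrib p → size p = (m : ℤ) → Reaches G ω p x t}

/-- `p_S` for a multiset `S` of pebbling moves:
`p_S(w) = p(w) + d⁻(w) − ∑ ω(w,u)` over arcs leaving `w`. -/
def applyMS [DecidableEq V] (ω : V → V → ℕ) (S : Multiset (V × V)) (p : V → ℤ) : V → ℤ :=
  fun w => p w + (Multiset.card (S.filter (fun m => m.2 = w)) : ℤ)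
    - ((S.filter (fun m => m.1 = w)).map (fun m => (ω m.1 m.2 : ℤ))).sum

/-- The transition digraph of `S` contains a directed cycle. -/
def HasCycle (S : Multiset (V × V)) : Prop :=
  ∃ l : List (V × V), l ≠ [] ∧ (l : Multiset (V × V)) ≤ S ∧
    List.Chain' (fun a b => a.2 = b.1) l ∧
    l.getLast?.map Prod.snd = l.head?.map Prod.fst

/-- A multiset of pebbling moves is acyclic if its transition digraph has no directed cycle. -/
def Acyclic (S : Multiset (V × V)) : Prop := ¬HasCycle S

/-- A list of pebbling moves is regular if each move is an initial move of the multiset of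
remaining moves: the source of each move has in-degree zero among the remaining moves. -/
def RegularSeq : List (V × V) → Prop
  | [] => True
  | m :: l => (∀ m' ∈ m :: l, m'.2 ≠ m.1) ∧ RegularSeq l

/-- The star graph with center `0` and leaves `1, …, n`. -/
def starG (n : ℕ) : SimpleGraph (Fin (n + 1)) :=
  SimpleGraph.fromRel (fun a b => a = 0 ∧ b ≠ 0)

/-- For a weighted star with center `x = 0` and leaves `v_i = i`
(`1 ≤ i ≤ n`), where the weight `a = ω(x v_1)` is maximal among the spike weights:
`π_t(G_ω, x) = t·a + ∑_{i=2}^{n} (ω(x v_i) − 1)` for all `t ≥ 1`. -/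
-- AUX START
lemma applyList_append [DecidableEq V] (ω : V → V → ℕ) (l1 l2 : List (V × V)) (p : V → ℤ) :
    applyList ω (l1 ++ l2) p = applyList ω l2 (applyList ω l1 p) := by
  induction l1 generalizing p with
  | nil => rfl
  | cons m l ih =>
    show applyList ω (l ++ l2) (moveFn ω m p) = applyList ω l2 (applyList ω (m :: l) p)
    rw [ih]
    rfl

lemma Executable_append [DecidableEq V] (G : SimpleGraph V) (ω : V → V → ℕ)
    (l1 l2 : List (V × V)) (p : V → ℤ)
    (h1 : Executable G ω p l1) (h2 : Executable G ω (applyList ω l1 p) l2) :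
    Executable G ω p (l1 ++ l2) := by
  induction l1 generalizing p with
  | nil => exact h2
  | cons m l ih =>
    obtain ⟨ha, hnn, hl⟩ := h1
    exact ⟨ha, hnn, ih _ hl h2⟩

lemma moveFn_mono [DecidableEq V] (ω : V → V → ℕ) (m : V × V) {p q : V → ℤ}
    (h : ∀ w, p w ≤ q w) : ∀ w, moveFn ω m p w ≤ moveFn ω m q w := by
  intro w
  unfold moveFn
  split_ifs
  · exact sub_le_sub_right (h m.1) _
  · exact add_le_add_left (h m.2) 1
  · exact h w

lemma exec_mono [DecidableEq V] (G : SimpleGraph V) (ω : V → V → ℕ) :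
    ∀ (l : List (V × V)) (p q : V → ℤ), (∀ w, p w ≤ q w) → Executable G ω p l →
      Executable G ω q l ∧ ∀ w, applyList ω l p w ≤ applyList ω l q w := by
  intro l
  induction l with
  | nil => exact fun p q h _ => ⟨trivial, h⟩
  | cons m l ih =>
    intro p q h hex
    obtain ⟨ha, hnn, hl⟩ := hex
    have hm := moveFn_mono ω m h
    obtain ⟨h1, h2⟩ := ih _ _ hm hl
    exact ⟨⟨ha, fun w => le_trans (hnn w) (hm w), h1⟩, h2⟩

lemma exec_nonneg [DecidableEq V] (G : SimpleGraph V) (ω : V → V → ℕ) :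
    ∀ (l : List (V × V)) (p : V → ℤ), (∀ w, 0 ≤ p w) → Executable G ω p l →
      ∀ w, 0 ≤ applyList ω l p w := by
  intro l
  induction l with
  | nil => exact fun p h _ => h
  | cons m l ih => exact fun p h hex => ih _ hex.2.1 hex.2.2

lemma starG_adj {n : ℕ} {u v : Fin (n+1)} :
    (starG n).Adj u v ↔ u ≠ v ∧ (u = 0 ∨ v = 0) := by
  simp only [starG, SimpleGraph.fromRel_adj]
  constructor
  · rintro ⟨h, h' | h'⟩
    · exact ⟨h, Or.inl h'.1⟩
    · exact ⟨h, Or.inr h'.1⟩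
  · rintro ⟨h, h' | h'⟩
    · exact ⟨h, Or.inl ⟨h', fun hv => h (h'.trans hv.symm)⟩⟩
    · exact ⟨h, Or.inr ⟨h', fun hu => h (hu.trans h'.symm)⟩⟩

lemma phi_step {n : ℕ} (ω : Fin (n+1) → Fin (n+1) → ℕ)
    (hsym : ∀ u v, ω u v = ω v u)
    (hw : ∀ i : Fin (n+1), i ≠ 0 → 2 ≤ ω 0 i)
    (m : Fin (n+1) × Fin (n+1)) (hadj : (starG n).Adj m.1 m.2)
    (p : Fin (n+1) → ℤ) :
    moveFn ω m p 0 + ∑ i ∈ univ.erase 0, moveFn ω m p i / (ω 0 i : ℤ)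
      ≤ p 0 + ∑ i ∈ univ.erase 0, p i / (ω 0 i : ℤ) := by
  obtain ⟨hne, hc | hc⟩ := starG_adj.mp hadj
  · -- m.1 = 0 : move from center to leaf m.2
    have h2 : m.2 ≠ 0 := fun h => hne (hc.trans h.symm)
    have hm2 : m.2 ∈ univ.erase 0 := mem_erase.mpr ⟨h2, mem_univ _⟩
    have ha : (2 : ℤ) ≤ (ω 0 m.2 : ℤ) := by exact_mod_cast hw m.2 h2
    have key : ∀ i ∈ (univ.erase (0 : Fin (n+1))).erase m.2,
        moveFn ω m p i / (ω 0 i : ℤ) = p i / (ω 0 i : ℤ) := by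
      intro i hi
      have hi2 := (mem_erase.mp hi).1
      have hi0 := (mem_erase.mp (mem_erase.mp hi).2).1
      have : moveFn ω m p i = p i := by
        unfold moveFn
        rw [if_neg (by rw [hc]; exact hi0), if_neg hi2]
      rw [this]
    rw [← Finset.add_sum_erase _ _ hm2, ← Finset.add_sum_erase _ (fun i => p i / (ω 0 i : ℤ)) hm2,
      Finset.sum_congr rfl key]
    have e0 : moveFn ω m p 0 = p 0 - (ω 0 m.2 : ℤ) := by
      unfold moveFn
      rw [if_pos hc.symm, ← hc]
    have e2 : moveFn ω m p m.2 = p m.2 + 1 := by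
      unfold moveFn
      rw [if_neg (by rw [hc]; exact h2), if_pos rfl]
    rw [e0, e2]
    have hdiv : (p m.2 + 1) / (ω 0 m.2 : ℤ) ≤ p m.2 / (ω 0 m.2 : ℤ) + 1 := by
      have h1 : (p m.2 + 1) / (ω 0 m.2 : ℤ) ≤ (p m.2 + (ω 0 m.2 : ℤ)) / (ω 0 m.2 : ℤ) :=
        Int.ediv_le_ediv (by linarith) (by linarith)
      have h2' : (p m.2 + (ω 0 m.2 : ℤ)) / (ω 0 m.2 : ℤ) = p m.2 / (ω 0 m.2 : ℤ) + 1 := by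
        have := Int.add_mul_ediv_right (p m.2) 1 (c := (ω 0 m.2 : ℤ)) (by linarith)
        simpa using this
      linarith
    linarith
  · -- m.2 = 0 : move from leaf m.1 to center
    have h1 : m.1 ≠ 0 := fun h => hne (h.trans hc.symm)
    have hm1 : m.1 ∈ univ.erase 0 := mem_erase.mpr ⟨h1, mem_univ _⟩
    have ha : (2 : ℤ) ≤ (ω 0 m.1 : ℤ) := by exact_mod_cast hw m.1 h1
    have key : ∀ i ∈ (univ.erase (0 : Fin (n+1))).erase m.1,
        moveFn ω m p i / (ω 0 i : ℤ) = p i / (ω 0 i : ℤ) := by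
      intro i hi
      have hi1 := (mem_erase.mp hi).1
      have hi0 := (mem_erase.mp (mem_erase.mp hi).2).1
      have : moveFn ω m p i = p i := by
        unfold moveFn
        rw [if_neg hi1, if_neg (by rw [hc]; exact hi0)]
      rw [this]
    rw [← Finset.add_sum_erase _ _ hm1, ← Finset.add_sum_erase _ (fun i => p i / (ω 0 i : ℤ)) hm1,
      Finset.sum_congr rfl key]
    have e0 : moveFn ω m p 0 = p 0 + 1 := by
      unfold moveFn
      rw [if_neg (Ne.symm h1), if_pos hc.symm, hc]
    have e1 : moveFn ω m p m.1 = p m.1 - (ω 0 m.1 : ℤ) := by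
      unfold moveFn
      rw [if_pos rfl, hc, hsym m.1 0]
    rw [e0, e1]
    have hdiv : (p m.1 - (ω 0 m.1 : ℤ)) / (ω 0 m.1 : ℤ) = p m.1 / (ω 0 m.1 : ℤ) - 1 := by
      have := Int.add_mul_ediv_right (p m.1) (-1) (c := (ω 0 m.1 : ℤ)) (by linarith)
      have h' : p m.1 + (-1) * (ω 0 m.1 : ℤ) = p m.1 - (ω 0 m.1 : ℤ) := by ring
      rw [h'] at this
      linarith [this]
    rw [hdiv]
    linarith

lemma phi_list {n : ℕ} (ω : Fin (n+1) → Fin (n+1) → ℕ)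
    (hsym : ∀ u v, ω u v = ω v u)
    (hw : ∀ i : Fin (n+1), i ≠ 0 → 2 ≤ ω 0 i) :
    ∀ (l : List (Fin (n+1) × Fin (n+1))) (p : Fin (n+1) → ℤ),
      Executable (starG n) ω p l →
      applyList ω l p 0 + ∑ i ∈ univ.erase 0, applyList ω l p i / (ω 0 i : ℤ)
        ≤ p 0 + ∑ i ∈ univ.erase 0, p i / (ω 0 i : ℤ) := by
  intro l
  induction l with
  | nil => exact fun p _ => le_refl _
  | cons m l ih =>
    intro p hex
    obtain ⟨ha, hnn, hl⟩ := hex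
    exact le_trans (ih _ hl) (phi_step ω hsym hw m ha p)

lemma rep_exec {n : ℕ} (ω : Fin (n+1) → Fin (n+1) → ℕ)
    (hsym : ∀ u v, ω u v = ω v u)
    (i : Fin (n+1)) (hi : i ≠ 0) :
    ∀ (k : ℕ) (p : Fin (n+1) → ℤ), (∀ w, 0 ≤ p w) → (k : ℤ) * (ω 0 i : ℤ) ≤ p i →
      Executable (starG n) ω p (List.replicate k (i, (0 : Fin (n+1)))) ∧
      applyList ω (List.replicate k (i, (0 : Fin (n+1)))) p 0 = p 0 + (k : ℤ) ∧
      applyList ω (List.replicate k (i, (0 : Fin (n+1)))) p i = p i - (k : ℤ) * (ω 0 i : ℤ) ∧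
      ∀ w, w ≠ i → w ≠ 0 →
        applyList ω (List.replicate k (i, (0 : Fin (n+1)))) p w = p w := by
  intro k
  induction k with
  | zero =>
    intro p hp _
    exact ⟨trivial, by simp [applyList], by simp [applyList], fun w _ _ => rfl⟩
  | succ k ih =>
    intro p hp hk
    have hadj : (starG n).Adj i 0 := starG_adj.mpr ⟨hi, Or.inr rfl⟩
    have hwi : (0 : ℤ) ≤ (ω 0 i : ℤ) := by positivity
    set q := moveFn ω (i, (0 : Fin (n+1))) p with hq
    have hqi : q i = p i - (ω 0 i : ℤ) := by
      simp [hq, moveFn, hsym i 0]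
    have hq0 : q 0 = p 0 + 1 := by
      simp only [hq, moveFn]
      rw [if_neg (Ne.symm hi)]
      simp
    have hqo : ∀ w, w ≠ i → w ≠ 0 → q w = p w := by
      intro w h1 h0
      simp only [hq, moveFn]
      rw [if_neg h1, if_neg h0]
    have hk' : (k : ℤ) * (ω 0 i : ℤ) ≤ q i := by
      rw [hqi]; push_cast at hk ⊢; nlinarith
    have hqnn : ∀ w, 0 ≤ q w := by
      intro w
      by_cases h1 : w = i
      · rw [h1, hqi]; push_cast at hk; nlinarith [hp i]
      · by_cases h0 : w = 0
        · rw [h0, hq0]; linarith [hp 0]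
        · rw [hqo w h1 h0]; exact hp w
    obtain ⟨hex, e0, e1, eo⟩ := ih q hqnn hk'
    have hrep : List.replicate (k+1) (i, (0 : Fin (n+1)))
        = (i, (0 : Fin (n+1))) :: List.replicate k (i, (0 : Fin (n+1))) := rfl
    rw [hrep]
    have hal : ∀ w, applyList ω ((i, (0 : Fin (n+1))) :: List.replicate k (i, (0 : Fin (n+1)))) p w
        = applyList ω (List.replicate k (i, (0 : Fin (n+1)))) q w := fun w => rfl
    refine ⟨⟨hadj, hqnn, hex⟩, ?_, ?_, ?_⟩
    · rw [hal 0, e0, hq0]; push_cast; ring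
    · rw [hal i, e1, hqi]; push_cast; ring
    · intro w h1 h0
      rw [hal w, eo w h1 h0, hqo w h1 h0]

lemma reach_center {n : ℕ} (ω : Fin (n+1) → Fin (n+1) → ℕ)
    (hsym : ∀ u v, ω u v = ω v u)
    (hw : ∀ i : Fin (n+1), i ≠ 0 → 2 ≤ ω 0 i) :
    ∀ (s : Finset (Fin (n+1))), (0 : Fin (n+1)) ∉ s →
      ∀ p : Fin (n+1) → ℤ, (∀ w, 0 ≤ p w) →
      ∃ l, Executable (starG n) ω p l ∧
        p 0 + ∑ i ∈ s, p i / (ω 0 i : ℤ) ≤ applyList ω l p 0 := by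
  intro s
  induction s using Finset.induction_on with
  | empty => exact fun _ p hp => ⟨[], trivial, by simp [applyList]⟩
  | @insert i s hs ih =>
    intro h0 p hp
    have hi : i ≠ 0 := fun h => h0 (h ▸ mem_insert_self i s)
    have h0s : (0 : Fin (n+1)) ∉ s := fun h => h0 (mem_insert_of_mem h)
    have hwi : (0 : ℤ) < (ω 0 i : ℤ) := by
      have := hw i hi
      exact_mod_cast Nat.lt_of_lt_of_le Nat.zero_lt_two this
    set k : ℕ := (p i / (ω 0 i : ℤ)).toNat with hkdef
    have hknn : (0 : ℤ) ≤ p i / (ω 0 i : ℤ) := Int.ediv_nonneg (hp i) (le_of_lt hwi)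
    have hkval : (k : ℤ) = p i / (ω 0 i : ℤ) := Int.toNat_of_nonneg hknn
    have hkle : (k : ℤ) * (ω 0 i : ℤ) ≤ p i := by
      rw [hkval]
      exact Int.ediv_mul_le (p i) (ne_of_gt hwi)
    obtain ⟨hex1, e0, e1, eo⟩ := rep_exec ω hsym i hi k p hp hkle
    set q := applyList ω (List.replicate k (i, (0 : Fin (n+1)))) p with hqdef
    have hqnn : ∀ w, 0 ≤ q w := by
      intro w
      by_cases h1 : w = i
      · rw [h1, e1]; linarith
      · by_cases h2 : w = 0
        · rw [h2, e0]
          have hkz : (0:ℤ) ≤ (k:ℤ) := Int.natCast_nonneg k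
          linarith [hp 0]
        · rw [eo w h1 h2]; exact hp w
    obtain ⟨l2, hex2, hle2⟩ := ih h0s q hqnn
    refine ⟨List.replicate k (i, (0 : Fin (n+1))) ++ l2,
      Executable_append _ _ _ _ _ hex1 hex2, ?_⟩
    rw [applyList_append, ← hqdef]
    have hsum : ∑ j ∈ s, q j / (ω 0 j : ℤ) = ∑ j ∈ s, p j / (ω 0 j : ℤ) := by
      apply Finset.sum_congr rfl
      intro j hj
      rw [eo j (fun h => hs (h ▸ hj)) (fun h => h0s (h ▸ hj))]
    rw [Finset.sum_insert hs]
    rw [hsum, e0, hkval] at hle2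
    linarith

theorem statement6 (n : ℕ) (hn : 1 ≤ n)
    (ω : Fin (n + 1) → Fin (n + 1) → ℕ)
    (hsym : ∀ u v, ω u v = ω v u)
    (hω : ∀ u v, (starG n).Adj u v → 2 ≤ ω u v)
    (hmax : ∀ i : Fin (n + 1), i ≠ 0 → ω 0 i ≤ ω 0 1) :
    ∀ t : ℕ, 1 ≤ t →
      piT (starG n) ω 0 t
        = t * ω 0 1 + ∑ i ∈ (Finset.univ : Finset (Fin (n + 1))) \ {0, 1}, (ω 0 i - 1) := by
  intro t ht
  classical
  have h10 : (1 : Fin (n+1)) ≠ 0 := by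
    intro h
    have h' := congrArg Fin.val h
    rw [Fin.val_one', Fin.val_zero, Nat.mod_eq_of_lt (by omega)] at h'
    omega
  have hw : ∀ i : Fin (n+1), i ≠ 0 → 2 ≤ ω 0 i := by
    intro i hi
    exact hω 0 i (starG_adj.mpr ⟨Ne.symm hi, Or.inl rfl⟩)
  have ha2 : (2 : ℤ) ≤ (ω 0 1 : ℤ) := by exact_mod_cast hw 1 h10
  set M : ℕ := t * ω 0 1 + ∑ i ∈ (Finset.univ : Finset (Fin (n + 1))) \ {0, 1}, (ω 0 i - 1)
    with hMdef
  have hmemD : ∀ i : Fin (n+1), i ∈ (Finset.univ : Finset (Fin (n+1))) \ {0,1} ↔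
      (i ≠ 0 ∧ i ≠ 1) := by
    intro i
    simp only [mem_sdiff, mem_univ, true_and, mem_insert, mem_singleton]
    tauto
  have h1mem : (1 : Fin (n+1)) ∉ (Finset.univ : Finset (Fin (n+1))) \ {0,1} := by
    rw [hmemD]; tauto
  have hsplit : Finset.univ.erase (0 : Fin (n+1))
      = insert 1 ((Finset.univ : Finset (Fin (n+1))) \ {0,1}) := by
    ext i
    rw [mem_insert, hmemD, mem_erase]
    simp only [mem_univ, and_true]
    constructor
    · intro h
      by_cases h1 : i = 1
      · exact Or.inl h1
      · exact Or.inr ⟨h, h1⟩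
    · rintro (rfl | ⟨h, _⟩)
      · exact h10
      · exact h
  have hMcast : (M : ℤ) = (t : ℤ) * (ω 0 1 : ℤ)
      + ∑ i ∈ (Finset.univ : Finset (Fin (n+1))) \ {0,1}, ((ω 0 i : ℤ) - 1) := by
    rw [hMdef]
    push_cast
    congr 1
    apply Finset.sum_congr rfl
    intro i hi
    have hi0 : i ≠ 0 := ((hmemD i).mp hi).1
    rw [Nat.cast_sub (le_trans one_le_two (hw i hi0))]
    simp
  set S' : ℤ := ∑ i ∈ (Finset.univ : Finset (Fin (n+1))) \ {0,1}, ((ω 0 i : ℤ) - 1) with hS'def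
  set P : Set ℕ := {m : ℕ | ∀ p : Fin (n+1) → ℤ, IsDistrib p → size p = (m : ℤ) →
    Reaches (starG n) ω p 0 t} with hPdef
  -- M ∈ P
  have hMmem : M ∈ P := by
    intro p hdist hsize
    have hsizeZ : p 0 + ∑ i ∈ Finset.univ.erase 0, p i = (t : ℤ) * (ω 0 1 : ℤ) + S' := by
      rw [Finset.add_sum_erase _ _ (mem_univ 0)]
      rw [← hMcast]
      exact hsize
    have hFnn : ∀ i ∈ Finset.univ.erase (0 : Fin (n+1)), (0:ℤ) ≤ p i / (ω 0 i : ℤ) := by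
      intro i hi
      exact Int.ediv_nonneg (hdist i) (by positivity)
    have hbound : ∀ i ∈ Finset.univ.erase (0 : Fin (n+1)),
        p i ≤ (p i / (ω 0 i : ℤ)) * (ω 0 1 : ℤ) + ((ω 0 i : ℤ) - 1) := by
      intro i hi
      have hi0 : i ≠ 0 := (mem_erase.mp hi).1
      have hai : (2:ℤ) ≤ (ω 0 i : ℤ) := by exact_mod_cast hw i hi0
      have hlt := Int.lt_ediv_add_one_mul_self (p i) (b := (ω 0 i : ℤ)) (by linarith)
      have hmono : (p i / (ω 0 i : ℤ)) * (ω 0 i : ℤ) ≤ (p i / (ω 0 i : ℤ)) * (ω 0 1 : ℤ) := by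
        apply mul_le_mul_of_nonneg_left _ (hFnn i hi)
        exact_mod_cast hmax i hi0
      nlinarith
    have hsum : ∑ i ∈ Finset.univ.erase (0 : Fin (n+1)), p i
        ≤ (∑ i ∈ Finset.univ.erase (0 : Fin (n+1)), p i / (ω 0 i : ℤ)) * (ω 0 1 : ℤ)
          + ((ω 0 1 : ℤ) - 1) + S' := by
      calc ∑ i ∈ Finset.univ.erase (0 : Fin (n+1)), p i
          ≤ ∑ i ∈ Finset.univ.erase (0 : Fin (n+1)),
            ((p i / (ω 0 i : ℤ)) * (ω 0 1 : ℤ) + ((ω 0 i : ℤ) - 1)) :=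
            Finset.sum_le_sum hbound
        _ = (∑ i ∈ Finset.univ.erase (0 : Fin (n+1)), p i / (ω 0 i : ℤ)) * (ω 0 1 : ℤ)
            + ∑ i ∈ Finset.univ.erase (0 : Fin (n+1)), ((ω 0 i : ℤ) - 1) := by
            rw [Finset.sum_add_distrib, Finset.sum_mul]
        _ = _ := by
            rw [hsplit, Finset.sum_insert h1mem, Finset.sum_insert h1mem, ← hS'def]
            ring
    set F : ℤ := ∑ i ∈ Finset.univ.erase (0 : Fin (n+1)), p i / (ω 0 i : ℤ) with hFdef
    have hF0 : (0:ℤ) ≤ F := Finset.sum_nonneg hFnn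
    have hp0 : (0:ℤ) ≤ p 0 := hdist 0
    have key : (t : ℤ) ≤ p 0 + F := by
      by_contra hcon
      push_neg at hcon
      have h1 : p 0 + F + 1 ≤ (t:ℤ) := by linarith
      have h2 : (t:ℤ) * (ω 0 1 : ℤ) ≤ p 0 + F * (ω 0 1 : ℤ) + (ω 0 1 : ℤ) - 1 := by
        linarith
      nlinarith [mul_le_mul_of_nonneg_right h1 (by linarith : (0:ℤ) ≤ (ω 0 1 : ℤ))]
    obtain ⟨l, hexec, hle⟩ := reach_center ω hsym hw (Finset.univ.erase 0)
      (by simp) p hdist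
    exact ⟨l, hexec, le_trans key (le_trans (le_of_eq rfl) hle)⟩
  -- upward closure
  have hup : ∀ m, m ∈ P → m + 1 ∈ P := by
    intro m hm p hdist hsize
    have hex : ∃ v, 1 ≤ p v := by
      by_contra hc
      push_neg at hc
      have hz : ∀ v, p v = 0 := fun v => le_antisymm (by linarith [hc v]) (hdist v)
      have : size p = 0 := Finset.sum_eq_zero (fun v _ => hz v)
      rw [hsize] at this
      push_cast at this
      omega
    obtain ⟨v, hv⟩ := hex
    set p' : Fin (n+1) → ℤ := Function.update p v (p v - 1) with hp'def
    have hval : ∀ w, p' w = if w = v then p v - 1 else p w := by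
      intro w
      by_cases h : w = v
      · rw [h, hp'def, Function.update_self, if_pos rfl]
      · rw [hp'def, Function.update_of_ne h, if_neg h]
    have hdist' : IsDistrib p' := by
      intro w
      rw [hval]
      by_cases h : w = v
      · rw [if_pos h]; linarith
      · rw [if_neg h]; exact hdist w
    have hsize' : size p' = (m : ℤ) := by
      unfold size
      rw [hp'def, Finset.sum_update_of_mem (mem_univ v)]
      have : ∑ x ∈ Finset.univ \ {v}, p x = size p - p v := by
        unfold size
        rw [← Finset.erase_eq, ← Finset.add_sum_erase _ _ (mem_univ v)]
        ring
      rw [this, hsize]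
      push_cast
      ring
    obtain ⟨l, hexec, hle⟩ := hm p' hdist' hsize'
    have hmono : ∀ w, p' w ≤ p w := by
      intro w
      rw [hval]
      by_cases h : w = v
      · rw [if_pos h, h]; linarith
      · rw [if_neg h]
    obtain ⟨hexec2, hle2⟩ := exec_mono (starG n) ω l p' p hmono hexec
    exact ⟨l, hexec2, le_trans hle (hle2 0)⟩
  have hups : ∀ k m, m ∈ P → m + k ∈ P := by
    intro k
    induction k with
    | zero => exact fun m h => h
    | succ k ih =>
      intro m h
      have h2 := hup _ (ih m h)
      have heq : m + k + 1 = m + (k + 1) := by omega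
      exact heq ▸ h2
  -- M - 1 ∉ P
  have hM1 : 1 ≤ M := by
    have h2a := hw 1 h10
    have : 2 ≤ t * ω 0 1 := by nlinarith
    omega
  have hlow : M - 1 ∉ P := by
    intro hmem
    set p0 : Fin (n+1) → ℤ := fun i => if i = 0 then 0
      else if i = 1 then (t:ℤ) * (ω 0 1 : ℤ) - 1 else (ω 0 i : ℤ) - 1 with hp0def
    have hval0 : ∀ w : Fin (n+1), p0 w = if w = 0 then 0
      else if w = 1 then (t:ℤ) * (ω 0 1 : ℤ) - 1 else (ω 0 w : ℤ) - 1 := fun w => rfl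
    have hta : (1:ℤ) ≤ (t:ℤ) * (ω 0 1 : ℤ) := by
      have : (1:ℤ) ≤ (t:ℤ) := by exact_mod_cast ht
      nlinarith
    have hdist0 : IsDistrib p0 := by
      intro w
      rw [hval0 w]
      by_cases h0 : w = 0
      · rw [if_pos h0]
      · rw [if_neg h0]

        by_cases h1 : w = 1
        · rw [if_pos h1]; linarith
        · rw [if_neg h1]
          have : (2:ℤ) ≤ (ω 0 w : ℤ) := by exact_mod_cast hw w h0
          linarith
    have hsize0 : size p0 = ((M - 1 : ℕ) : ℤ) := by
      unfold size
      rw [← Finset.add_sum_erase _ _ (mem_univ (0 : Fin (n+1)))]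
      rw [hsplit, Finset.sum_insert h1mem]
      have e0 : p0 0 = 0 := by rw [hval0 0, if_pos rfl]
      have e1 : p0 1 = (t:ℤ) * (ω 0 1 : ℤ) - 1 := by
        rw [hval0 1, if_neg h10, if_pos rfl]
      have eo : ∑ i ∈ (Finset.univ : Finset (Fin (n+1))) \ {0,1}, p0 i = S' := by
        apply Finset.sum_congr rfl
        intro i hi
        obtain ⟨hi0, hi1⟩ := (hmemD i).mp hi
        rw [hval0 i, if_neg hi0, if_neg hi1]
      rw [e0, e1, eo]
      have : ((M - 1 : ℕ) : ℤ) = (M : ℤ) - 1 := by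
        push_cast [hM1]
        ring
      rw [this, hMcast]
      ring
    obtain ⟨l, hexec, hreach⟩ := hmem p0 hdist0 hsize0
    -- potential argument
    have hphi := phi_list ω hsym hw l p0 hexec
    have hfin_nn : ∀ w, 0 ≤ applyList ω l p0 w := exec_nonneg _ ω l p0 hdist0 hexec
    have hfin_sum : (0:ℤ) ≤ ∑ i ∈ Finset.univ.erase (0 : Fin (n+1)),
        applyList ω l p0 i / (ω 0 i : ℤ) := by
      apply Finset.sum_nonneg
      intro i hi
      exact Int.ediv_nonneg (hfin_nn i) (by positivity)
    have hphi0 : p0 0 + ∑ i ∈ Finset.univ.erase (0 : Fin (n+1)), p0 i / (ω 0 i : ℤ)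
        = (t:ℤ) - 1 := by
      have e0 : p0 0 = 0 := by rw [hval0 0, if_pos rfl]
      rw [e0, hsplit, Finset.sum_insert h1mem]
      have e1 : p0 1 / (ω 0 1 : ℤ) = (t:ℤ) - 1 := by
        have e1' : p0 1 = ((ω 0 1 : ℤ) - 1) + ((t:ℤ) - 1) * (ω 0 1 : ℤ) := by
          rw [hval0 1, if_neg h10, if_pos rfl]
          ring
        rw [e1', Int.add_mul_ediv_right _ _ (by linarith : (ω 0 1 : ℤ) ≠ 0)]
        rw [Int.ediv_eq_zero_of_lt (by linarith) (by linarith)]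
        ring
      have eo : ∑ i ∈ (Finset.univ : Finset (Fin (n+1))) \ {0,1}, p0 i / (ω 0 i : ℤ) = 0 := by
        apply Finset.sum_eq_zero
        intro i hi
        obtain ⟨hi0, hi1⟩ := (hmemD i).mp hi
        have hai : (2:ℤ) ≤ (ω 0 i : ℤ) := by exact_mod_cast hw i hi0
        have : p0 i = (ω 0 i : ℤ) - 1 := by
          rw [hval0 i, if_neg hi0, if_neg hi1]
        rw [this]
        exact Int.ediv_eq_zero_of_lt (by linarith) (by linarith)
      rw [e1, eo]
      ring
    rw [hphi0] at hphi
    have : (t:ℤ) ≤ applyList ω l p0 0 := hreach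
    linarith
  -- conclude
  have hpit : piT (starG n) ω 0 t = sInf P := rfl
  rw [hpit]
  show sInf P = M
  refine le_antisymm (Nat.sInf_le hMmem) ?_
  by_contra hlt
  push_neg at hlt
  have hmem := Nat.sInf_mem (⟨M, hMmem⟩ : P.Nonempty)
  have : M - 1 ∈ P := by
    have h := hups (M - 1 - sInf P) (sInf P) hmem
    have heq : sInf P + (M - 1 - sInf P) = M - 1 := by omega
    rwa [heq] at h
  exact hlow this
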